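/- A function f : X → Y is multi-split continuous at p ∈ X if and only if there is a finite non-empty set Z_p ⊆ Y such that (a') for every y ∈ Z_p there is a net ⟨x_λ⟩ converging to p in X with ⟨f(x_λ)⟩ converging to y in Y, and (b') for every net ⟨x_λ⟩ converging to p, some y ∈ Z_p is a cluster point of ⟨f(x_λ)⟩. -/

import Mathlib

open Filter Topology Set

universe u v w

variable {X : Type u} {Y : Type v} [TopologicalSpace X] [TopologicalSpace Y]

/-- `Z` is a set of extended values of `f` at `p`. -/
def ExtendedValues (f : X → Y) (p : X) (Z : Set Y) : Prop :=
  Z.Finite ∧ Z.Nonempty ∧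
    (∀ y ∈ Z, ∀ U ∈ 𝓝 p, ∀ V ∈ 𝓝 y, (f '' U ∩ V).Nonempty) ∧
    (∀ V ∈ 𝓝ˢ Z, ∃ U ∈ 𝓝 p, f '' U ⊆ V)

/-- `f` is multi-split continuous at `p`. -/
def MultiSplitAt (f : X → Y) (p : X) : Prop := ∃ Z : Set Y, ExtendedValues f p Z

/-- `le` is an upward directed preorder on `ι`. -/
def IsDirectedPre {ι : Type w} (le : ι → ι → Prop) : Prop :=
  (∀ i, le i i) ∧ (∀ i j k, le i j → le j k → le i k) ∧ ∀ i j, ∃ k, le i k ∧ le j k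

/-- `p` is a limit point of the net `x` indexed by `(ι, le)`. -/
def IsNetLimit {ι : Type w} {A : Type*} [TopologicalSpace A] (le : ι → ι → Prop)
    (x : ι → A) (p : A) : Prop := ∀ U ∈ 𝓝 p, ∃ i₀, ∀ i, le i₀ i → x i ∈ U

/-- `p` is a cluster point of the net `x` indexed by `(ι, le)`. -/
def IsNetCluster {ι : Type w} {A : Type*} [TopologicalSpace A] (le : ι → ι → Prop)
    (x : ι → A) (p : A) : Prop := ∀ U ∈ 𝓝 p, ∀ i₀, ∃ i, le i₀ i ∧ x i ∈ U

theorem stmt5 (f : X → Y) (p : X) :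
    MultiSplitAt f p ↔
      ∃ Z : Set Y, Z.Finite ∧ Z.Nonempty ∧
        (∀ y ∈ Z, ∃ (ι : Type (max u v)) (le : ι → ι → Prop) (x : ι → X),
            Nonempty ι ∧ IsDirectedPre le ∧ IsNetLimit le x p ∧ IsNetLimit le (f ∘ x) y) ∧
        (∀ (ι : Type (max u v)) (le : ι → ι → Prop) (x : ι → X),
            Nonempty ι → IsDirectedPre le → IsNetLimit le x p →
            ∃ y ∈ Z, IsNetCluster le (f ∘ x) y) := by
  constructor
  · rintro ⟨Z, hZfin, hZne, ha, hb⟩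
    refine ⟨Z, hZfin, hZne, ?_, ?_⟩
    · intro y hy
      -- build a net indexed by pairs of neighborhoods
      refine ⟨{q : Set X × Set Y // q.1 ∈ 𝓝 p ∧ q.2 ∈ 𝓝 y},
        fun a b => b.1.1 ⊆ a.1.1 ∧ b.1.2 ⊆ a.1.2, ?_⟩
      have hch : ∀ q : {q : Set X × Set Y // q.1 ∈ 𝓝 p ∧ q.2 ∈ 𝓝 y},
          ∃ x : X, x ∈ q.1.1 ∧ f x ∈ q.1.2 := by
        intro q
        obtain ⟨z, ⟨x, hxU, rfl⟩, hzV⟩ := ha y hy q.1.1 q.2.1 q.1.2 q.2.2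
        exact ⟨x, hxU, hzV⟩
      refine ⟨fun q => Classical.choose (hch q), ⟨⟨(univ, univ), univ_mem, univ_mem⟩⟩,
        ⟨fun i => ⟨Subset.rfl, Subset.rfl⟩,
         fun i j k hij hjk => ⟨hjk.1.trans hij.1, hjk.2.trans hij.2⟩,
         fun i j => ⟨⟨(i.1.1 ∩ j.1.1, i.1.2 ∩ j.1.2),
            inter_mem i.2.1 j.2.1, inter_mem i.2.2 j.2.2⟩,
            ⟨inter_subset_left, inter_subset_left⟩,
            ⟨inter_subset_right, inter_subset_right⟩⟩⟩, ?_, ?_⟩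
      · intro U hU
        refine ⟨⟨(U, univ), hU, univ_mem⟩, fun i hi => ?_⟩
        exact hi.1 (Classical.choose_spec (hch i)).1
      · intro V hV
        refine ⟨⟨(univ, V), univ_mem, hV⟩, fun i hi => ?_⟩
        exact hi.2 (Classical.choose_spec (hch i)).2
    · intro ι le x hne hdir hlim
      by_contra hcon
      push_neg at hcon
      -- for each y ∈ Z pick a neighborhood V y and index i y escaping it
      have hsel : ∀ y ∈ Z, ∃ V ∈ 𝓝 y, ∃ i₀, ∀ i, le i₀ i → f (x i) ∉ V := by
        intro y hy
        have := hcon y hy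
        unfold IsNetCluster at this
        push_neg at this
        obtain ⟨V, hV, i₀, h⟩ := this
        exact ⟨V, hV, i₀, fun i hi => h i hi⟩
      choose! V hV i₀ hi₀ using hsel
      -- an upper bound for finitely many indices
      have hub : ∀ s : Set Y, s.Finite → ∃ M, ∀ y ∈ s, y ∈ Z → le (i₀ y) M := by
        intro s hs
        refine Set.Finite.induction_on s hs ?_ ?_
        · exact ⟨Classical.choice hne, fun y hy => absurd hy (notMem_empty y)⟩
        · rintro a t _ _ ⟨M, hM⟩
          obtain ⟨M', hM1, hM2⟩ := hdir.2.2 (i₀ a) M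
          refine ⟨M', fun y hy hyZ => ?_⟩
          rcases hy with rfl | hy
          · exact hM1
          · exact hdir.2.1 _ _ _ (hM y hy hyZ) hM2
      obtain ⟨M, hM⟩ := hub Z hZfin
      have hVZ : (⋃ y ∈ Z, V y) ∈ 𝓝ˢ Z := by
        rw [mem_nhdsSet_iff_forall]
        intro z hz
        exact mem_of_superset (hV z hz) (subset_biUnion_of_mem hz)
      obtain ⟨U, hU, hUV⟩ := hb _ hVZ
      obtain ⟨i₁, hi₁⟩ := hlim U hU
      obtain ⟨k, hk1, hk2⟩ := hdir.2.2 i₁ M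
      have hfk : f (x k) ∈ ⋃ y ∈ Z, V y := hUV ⟨x k, hi₁ k hk1, rfl⟩
      obtain ⟨y, hy, hfy⟩ := mem_iUnion₂.mp hfk
      exact hi₀ y hy k (hdir.2.1 _ _ _ (hM y hy hy) hk2) hfy
  · rintro ⟨Z, hZfin, hZne, ha, hb⟩
    refine ⟨Z, hZfin, hZne, ?_, ?_⟩
    · intro y hy U hU V hV
      obtain ⟨ι, le, x, hne, hdir, hlx, hlfx⟩ := ha y hy
      obtain ⟨i₁, h₁⟩ := hlx U hU
      obtain ⟨i₂, h₂⟩ := hlfx V hV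
      obtain ⟨k, hk1, hk2⟩ := hdir.2.2 i₁ i₂
      exact ⟨f (x k), ⟨x k, h₁ k hk1, rfl⟩, h₂ k hk2⟩
    · intro V hV
      by_contra hcon
      push_neg at hcon
      have hsel : ∀ U : {U : Set X // U ∈ 𝓝 p}, ∃ x : X, x ∈ U.1 ∧ f x ∉ V := by
        intro U
        obtain ⟨z, ⟨x, hxU, rfl⟩, hz⟩ := not_subset.mp (hcon U.1 U.2)
        exact ⟨x, hxU, hz⟩
      let ι := ULift.{v} {U : Set X // U ∈ 𝓝 p}
      let g : ι → X := fun i => Classical.choose (hsel i.down)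
      have hg : ∀ i : ι, g i ∈ i.down.1 ∧ f (g i) ∉ V := fun i =>
        Classical.choose_spec (hsel i.down)
      have hdir : IsDirectedPre (fun a b : ι => b.down.1 ⊆ a.down.1) :=
        ⟨fun i => Subset.rfl, fun i j k hij hjk => hjk.trans hij,
         fun i j => ⟨⟨⟨i.down.1 ∩ j.down.1, inter_mem i.down.2 j.down.2⟩⟩,
           inter_subset_left, inter_subset_right⟩⟩
      have hlim : IsNetLimit (fun a b : ι => b.down.1 ⊆ a.down.1) g p := by
        intro U hU
        exact ⟨⟨⟨U, hU⟩⟩, fun i hi => hi (hg i).1⟩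
      obtain ⟨y, hy, hcl⟩ := hb ι _ g ⟨⟨⟨univ, univ_mem⟩⟩⟩ hdir hlim
      have hVy : V ∈ 𝓝 y := mem_nhdsSet_iff_forall.mp hV y hy
      obtain ⟨i, _, hi⟩ := hcl V hVy ⟨⟨univ, univ_mem⟩⟩
      exact (hg i).2 hi
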